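/- Let G = (V,E) be a finite connected graph with symmetric irreflexive edge relation, where each edge (i,j) ∈ E carries a continuous, strictly increasing bijection f_{ij} : ℝ → ℝ satisfying f_{ij}(x) = −f_{ji}(−x) for all x. Let T ⊆ V be nonempty, let β : T → ℝ, and let q : V \ T → ℝ. Then there exists a potential π : V → ℝ with π_t = β_t for all t ∈ T such that ∑_{j ∈ ∂i} f_{ji}^{-1}(π_j − π_i) + q_i = 0 for every i ∈ V \ T. -/

import Mathlib

open Finset intervalIntegral

section aux

lemma hasDerivAt_primitive {g : ℝ → ℝ} (hg : Continuous g) (y : ℝ) :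
    HasDerivAt (fun t => ∫ s in (0:ℝ)..t, g s) (g y) y :=
  integral_hasDerivAt_right (hg.intervalIntegrable _ _)
    (hg.stronglyMeasurableAtFilter _ _) hg.continuousAt

lemma continuous_primitive' {g : ℝ → ℝ} (hg : Continuous g) :
    Continuous (fun t => ∫ s in (0:ℝ)..t, g s) := by
  have : Differentiable ℝ (fun t => ∫ s in (0:ℝ)..t, g s) :=
    fun y => (hasDerivAt_primitive hg y).differentiableAt
  exact this.continuous

lemma primitive_diff {g : ℝ → ℝ} (hg : Continuous g) (a b : ℝ) :
    (∫ s in (0:ℝ)..b, g s) - (∫ s in (0:ℝ)..a, g s) = ∫ s in a..b, g s := by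
  rw [← intervalIntegral.integral_add_adjacent_intervals
    (hg.intervalIntegrable (0:ℝ) a) (hg.intervalIntegrable a b)]
  ring

/-- superlinear lower bound for the primitive of a surjective monotone continuous function -/
lemma primitive_superlinear {g : ℝ → ℝ} (hg : Continuous g) (hm : Monotone g)
    (hs : Function.Surjective g) {c : ℝ} (hc : 0 ≤ c) :
    ∃ C : ℝ, ∀ t : ℝ, c * |t| - C ≤ ∫ s in (0:ℝ)..t, g s := by
  obtain ⟨Mp, hMp⟩ := hs c
  obtain ⟨Mm, hMm⟩ := hs (-c)
  set K : ℝ := max (max |Mp| |Mm|) 1 with hK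
  have hK0 : 0 < K := lt_of_lt_of_le one_pos (le_max_right _ _)
  have habsMp : |Mp| ≤ K := le_trans (le_max_left _ _) (le_max_left _ _)
  have habsMm : |Mm| ≤ K := le_trans (le_max_right _ _) (le_max_left _ _)
  obtain ⟨hMp1, hMp2⟩ := abs_le.1 habsMp
  obtain ⟨hMm1, hMm2⟩ := abs_le.1 habsMm
  have hΦcont : ContinuousOn (fun t => ∫ s in (0:ℝ)..t, g s) (Set.Icc (-K) K) :=
    (continuous_primitive' hg).continuousOn
  obtain ⟨z, hzmem, hz⟩ := IsCompact.exists_isMinOn isCompact_Icc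
    ⟨0, by constructor <;> linarith⟩ hΦcont
  set m : ℝ := ∫ s in (0:ℝ)..z, g s with hm'
  refine ⟨c * K - m, fun t => ?_⟩
  rcases le_total t (-K) with ht | ht
  · have h1 := primitive_diff hg t Mm
    have h2 : ∫ s in t..Mm, g s ≤ ∫ s in t..Mm, (-c) := by
      apply intervalIntegral.integral_mono_on (by linarith) (hg.intervalIntegrable _ _)
        intervalIntegrable_const
      intro x hx
      calc g x ≤ g Mm := hm hx.2
        _ = -c := hMm
    rw [intervalIntegral.integral_const, smul_eq_mul] at h2
    have hPhiMm : m ≤ ∫ s in (0:ℝ)..Mm, g s := hz ⟨hMm1, hMm2⟩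
    have habs : |t| = -t := abs_of_nonpos (by linarith)
    nlinarith
  · rcases le_total K t with ht2 | ht2
    · have h1 := primitive_diff hg Mp t
      have h2 : ∫ s in Mp..t, (c:ℝ) ≤ ∫ s in Mp..t, g s := by
        apply intervalIntegral.integral_mono_on (by linarith) intervalIntegrable_const
          (hg.intervalIntegrable _ _)
        intro x hx
        calc (c:ℝ) = g Mp := hMp.symm
          _ ≤ g x := hm hx.1
      rw [intervalIntegral.integral_const, smul_eq_mul] at h2
      have hPhiMp : m ≤ ∫ s in (0:ℝ)..Mp, g s := hz ⟨hMp1, hMp2⟩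
      have habs : |t| = t := abs_of_nonneg (by linarith)
      nlinarith
    · have hPhit : m ≤ ∫ s in (0:ℝ)..t, g s := hz ⟨ht, ht2⟩
      have habs : |t| ≤ K := abs_le.2 ⟨ht, ht2⟩
      nlinarith

lemma walk_gap_bound {V : Type*} {G : SimpleGraph V}
    (π : V → ℝ) (δ : ℝ)
    (hedge : ∀ a b, G.Adj a b → |π a - π b| ≤ δ)
    {u v : V} (w : G.Walk u v) :
    |π u - π v| ≤ w.length * δ := by
  induction w with
  | nil => simp
  | cons h p ih =>
    rename_i a b c
    have h1 := hedge a b h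
    have htri : |π a - π c| ≤ |π a - π b| + |π b - π c| := abs_sub_le _ _ _
    simp only [SimpleGraph.Walk.length_cons]
    push_cast
    nlinarith

lemma reachable_gap_bound {V : Type*} [Fintype V] {G : SimpleGraph V}
    [DecidableEq V]
    (π : V → ℝ) (δ : ℝ) (hδ : 0 ≤ δ)
    (hedge : ∀ a b, G.Adj a b → |π a - π b| ≤ δ)
    {u v : V} (h : G.Reachable u v) :
    |π u - π v| ≤ (Fintype.card V) * δ := by
  obtain ⟨w⟩ := h
  have hp := w.toPath
  calc |π u - π v| ≤ (hp : G.Walk u v).length * δ := walk_gap_bound π δ hedge _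
    _ ≤ (Fintype.card V) * δ := by
        have h1 := hp.2.length_lt
        have h2 : ((hp : G.Walk u v).length : ℝ) ≤ (Fintype.card V : ℝ) := by
          exact_mod_cast h1.le
        nlinarith

end aux

theorem dissipative_potential_exists
    {V : Type*} [Fintype V] [DecidableEq V] [Nonempty V]
    (E : V → V → Prop) [DecidableRel E]
    (hsymm : ∀ i j, E i j → E j i)
    (hirrefl : ∀ i, ¬ E i i)
    (hconn : ∀ u v : V, Relation.ReflTransGen E u v)
    (f : V → V → ℝ → ℝ)
    (hfcont : ∀ i j, E i j → Continuous (f i j))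
    (hfmono : ∀ i j, E i j → StrictMono (f i j))
    (hfbij : ∀ i j, E i j → Function.Bijective (f i j))
    (hfsymm : ∀ i j, E i j → ∀ x : ℝ, f i j x = - f j i (-x))
    (finv : V → V → ℝ → ℝ)
    (hfinv : ∀ i j, E i j →
      Function.LeftInverse (finv i j) (f i j) ∧
      Function.RightInverse (finv i j) (f i j))
    (T : Finset V) (hT : T.Nonempty)
    (β : {i : V // i ∈ T} → ℝ)
    (q : {i : V // i ∉ T} → ℝ) :
    ∃ π : V → ℝ,
      (∀ t (h : t ∈ T), π t = β ⟨t, h⟩) ∧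
      (∀ i (h : i ∉ T),
        (∑ j ∈ univ.filter (fun j => E j i), finv j i (π j - π i)) + q ⟨i, h⟩ = 0) := by
  classical
  by_cases hTall : ∀ v : V, v ∈ T
  · exact ⟨fun v => β ⟨v, hTall v⟩, fun t h => rfl, fun i h => absurd (hTall i) h⟩
  push_neg at hTall
  obtain ⟨v₀, hv₀⟩ := hTall
  obtain ⟨t₀, ht₀⟩ := hT
  -- basic properties of finv on edges
  have hkey : ∀ j k, E j k → Continuous (finv j k) ∧ Monotone (finv j k) := by
    intro j k h
    set e := StrictMono.orderIsoOfSurjective (f j k) (hfmono j k h) (hfbij j k h).2 with he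
    have hge : finv j k = ⇑e.symm := by
      funext y
      have h1 : f j k (e.symm y) = y := by
        have := e.apply_symm_apply y
        rwa [he, StrictMono.coe_orderIsoOfSurjective] at this
      have h2 : finv j k (f j k (e.symm y)) = e.symm y := (hfinv j k h).1 _
      rw [h1] at h2; exact h2
    rw [hge]
    exact ⟨OrderIso.continuous e.symm, e.symm.monotone⟩
  have hgcont : ∀ j k, E j k → Continuous (finv j k) := fun j k h => (hkey j k h).1
  have hgmono : ∀ j k, E j k → Monotone (finv j k) := fun j k h => (hkey j k h).2
  have hgsurj : ∀ j k, E j k → Function.Surjective (finv j k) :=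
    fun j k h => (hfinv j k h).1.surjective
  have hgodd : ∀ j k, E j k → ∀ s : ℝ, finv j k s = - finv k j (-s) := by
    intro j k h s
    have hk := hsymm j k h
    have h1 : f j k (finv j k s) = s := (hfinv j k h).2 s
    have h2 : f k j (-(finv j k s)) = -s := by
      have h3 := hfsymm j k h (finv j k s)
      rw [h1] at h3
      linarith
    have h4 : finv k j (-s) = -(finv j k s) := by
      rw [← h2]; exact (hfinv k j hk).1 _
    rw [h4]; ring
  -- edge pair set and energies
  set P : Finset (V × V) := univ.filter (fun p : V × V => E p.1 p.2) with hP
  have hPmem : ∀ p : V × V, p ∈ P ↔ E p.1 p.2 := by intro p; simp [hP]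
  set Φ : V → V → ℝ → ℝ := fun j k t => ∫ s in (0:ℝ)..t, finv j k s with hΦdef
  haveI : Nonempty {i : V // i ∉ T} := ⟨⟨v₀, hv₀⟩⟩
  set ext : ({i : V // i ∉ T} → ℝ) → (V → ℝ) :=
    fun x v => if h : v ∈ T then β ⟨v, h⟩ else x ⟨v, h⟩ with hext
  set Kv : (V → ℝ) → ℝ := fun π =>
    (∑ p ∈ P, Φ p.1 p.2 (π p.1 - π p.2)) - 2 * ∑ s : {i : V // i ∉ T}, q s * π ↑s with hKv
  -- continuity
  have hKvcont : Continuous Kv := by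
    apply Continuous.sub
    · apply continuous_finset_sum
      intro p hp
      exact (continuous_primitive' (hgcont _ _ ((hPmem p).1 hp))).comp
        ((continuous_apply p.1).sub (continuous_apply p.2))
    · exact continuous_const.mul
        (continuous_finset_sum _ (fun s _ => continuous_const.mul (continuous_apply _)))
  have hextcont : Continuous ext := by
    apply continuous_pi
    intro v
    simp only [hext]
    by_cases h : v ∈ T
    · simp only [dif_pos h]; exact continuous_const
    · simp only [dif_neg h]; exact continuous_apply _
  -- graph and reachability
  set G : SimpleGraph V := ⟨E, ⟨fun a b h => hsymm a b h⟩, ⟨fun a h => hirrefl a h⟩⟩ with hG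
  have hreach : ∀ u w : V, G.Reachable u w := by
    intro u w
    rw [SimpleGraph.reachable_iff_reflTransGen]
    exact hconn u w
  -- coercivity
  have hcoer : ∃ A : ℝ, ∀ x : ({i : V // i ∉ T} → ℝ), ‖x‖ - A ≤ Kv (ext x) := by
    set n : ℝ := (Fintype.card V : ℝ) with hn
    have hn1 : (1:ℝ) ≤ n := by rw [hn]; exact_mod_cast Fintype.card_pos (α := V)
    set Q : ℝ := ∑ s : {i : V // i ∉ T}, |q s| with hQ
    have hQ0 : 0 ≤ Q := Finset.sum_nonneg fun _ _ => abs_nonneg _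
    set c : ℝ := n * (2 * Q + 1) with hc
    have hc0 : 0 ≤ c := by positivity
    have hslex : ∀ p : V × V, ∃ C : ℝ, E p.1 p.2 → ∀ t, c * |t| - C ≤ Φ p.1 p.2 t := by
      intro p
      by_cases h : E p.1 p.2
      · obtain ⟨C, hC⟩ := primitive_superlinear (hgcont _ _ h) (hgmono _ _ h) (hgsurj _ _ h) hc0
        exact ⟨C, fun _ => hC⟩
      · exact ⟨0, fun h' => absurd h' h⟩
    choose C hC using hslex
    have hlbex : ∀ p : V × V, ∃ C : ℝ, E p.1 p.2 → ∀ t, - C ≤ Φ p.1 p.2 t := by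
      intro p
      by_cases h : E p.1 p.2
      · obtain ⟨C, hC⟩ := primitive_superlinear (hgcont _ _ h) (hgmono _ _ h) (hgsurj _ _ h)
          (le_refl (0:ℝ))
        exact ⟨C, fun _ t => by have := hC t; simp at this; linarith [this]⟩
      · exact ⟨0, fun h' => absurd h' h⟩
    choose Cm hCm using hlbex
    set C1 : ℝ := ∑ p ∈ P, |C p| with hC1
    set C2 : ℝ := ∑ p ∈ P, |Cm p| with hC2
    set B : ℝ := |β ⟨t₀, ht₀⟩| with hB
    have hB0 : 0 ≤ B := abs_nonneg _
    refine ⟨(2*Q+1) * B + C1 + C2, fun x => ?_⟩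
    set π : V → ℝ := ext x with hπ
    have hPne : P.Nonempty := by
      rcases (Relation.ReflTransGen.cases_head (hconn v₀ t₀)) with heq | ⟨b, hb, _⟩
      · exact absurd (heq ▸ ht₀) hv₀
      · exact ⟨(v₀, b), (hPmem _).2 hb⟩
    obtain ⟨p0, hp0P, hp0⟩ := Finset.exists_mem_eq_sup' hPne (fun p => |π p.1 - π p.2|)
    set δ : ℝ := P.sup' hPne (fun p => |π p.1 - π p.2|) with hδ
    have hδ0 : 0 ≤ δ := by rw [hp0]; exact abs_nonneg _
    have hedge : ∀ a b, E a b → |π a - π b| ≤ δ :=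
      fun a b h => Finset.le_sup' (fun p : V × V => |π p.1 - π p.2|) ((hPmem (a,b)).2 h)
    have hvb : ∀ w : V, |π w - π t₀| ≤ n * δ := fun w =>
      reachable_gap_bound π δ hδ0 (fun a b h => hedge a b h) (hreach w t₀)
    have hπt0 : π t₀ = β ⟨t₀, ht₀⟩ := by simp [hπ, hext, ht₀]
    have hπs : ∀ s : {i : V // i ∉ T}, π ↑s = x s := by
      intro s; simp [hπ, hext, s.2]
    have hxnorm : ‖x‖ ≤ B + n * δ := by
      rw [pi_norm_le_iff_of_nonneg (by positivity)]
      intro s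
      have h1 := hvb ↑s
      rw [Real.norm_eq_abs, ← hπs s]
      calc |π ↑s| ≤ |π ↑s - π t₀| + |π t₀| := by
            have := abs_sub_abs_le_abs_sub (π ↑s) (π t₀); have := abs_add_le (π ↑s - π t₀) (π t₀)
            calc |π ↑s| = |(π ↑s - π t₀) + π t₀| := by ring_nf
              _ ≤ |π ↑s - π t₀| + |π t₀| := abs_add_le _ _
        _ ≤ n * δ + B := by rw [hπt0] at *; exact add_le_add h1 (le_of_eq rfl)
        _ = B + n * δ := by ring
    have hsum : (c * δ - C1) - C2 ≤ ∑ p ∈ P, Φ p.1 p.2 (π p.1 - π p.2) := by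
      rw [← Finset.add_sum_erase _ _ hp0P]
      have h1 : c * δ - C1 ≤ Φ p0.1 p0.2 (π p0.1 - π p0.2) := by
        have h2 := hC p0 ((hPmem p0).1 hp0P) (π p0.1 - π p0.2)
        have hCle : C p0 ≤ C1 := by
          calc C p0 ≤ |C p0| := le_abs_self _
            _ ≤ C1 := Finset.single_le_sum (fun p _ => abs_nonneg (C p)) hp0P
        rw [← hp0] at h2
        linarith
      have h2 : -C2 ≤ ∑ p ∈ P.erase p0, Φ p.1 p.2 (π p.1 - π p.2) := by
        have h3 : ∑ p ∈ P.erase p0, -|Cm p| ≤ ∑ p ∈ P.erase p0, Φ p.1 p.2 (π p.1 - π p.2) := by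
          apply Finset.sum_le_sum
          intro p hp
          have hE := (hPmem p).1 (Finset.mem_of_mem_erase hp)
          have := hCm p hE (π p.1 - π p.2)
          have : -(Cm p) ≤ Φ p.1 p.2 (π p.1 - π p.2) := this
          linarith [le_abs_self (Cm p)]
        have h4 : ∑ p ∈ P.erase p0, |Cm p| ≤ C2 :=
          Finset.sum_le_sum_of_subset_of_nonneg (Finset.erase_subset _ _)
            (fun p _ _ => abs_nonneg _)
        have h5 : -C2 ≤ ∑ p ∈ P.erase p0, -|Cm p| := by
          rw [Finset.sum_neg_distrib]; linarith
        linarith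
      linarith
    have hlin : |∑ s : {i : V // i ∉ T}, q s * π ↑s| ≤ Q * ‖x‖ := by
      calc |∑ s : {i : V // i ∉ T}, q s * π ↑s|
          ≤ ∑ s : {i : V // i ∉ T}, |q s * π ↑s| := Finset.abs_sum_le_sum_abs _ _
        _ ≤ ∑ s : {i : V // i ∉ T}, |q s| * ‖x‖ := by
            apply Finset.sum_le_sum
            intro s _
            rw [abs_mul, hπs s]
            exact mul_le_mul_of_nonneg_left ((Real.norm_eq_abs (x s)) ▸ norm_le_pi_norm x s)
              (abs_nonneg _)
        _ = Q * ‖x‖ := by rw [hQ, Finset.sum_mul]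
    have hnorm0 : (0:ℝ) ≤ ‖x‖ := norm_nonneg x
    have hKval : Kv π = (∑ p ∈ P, Φ p.1 p.2 (π p.1 - π p.2))
        - 2 * ∑ s : {i : V // i ∉ T}, q s * π ↑s := rfl
    have habs2 := abs_le.1 hlin
    have hcδ : (2*Q+1) * (‖x‖ - B) ≤ c * δ := by
      have : ‖x‖ - B ≤ n * δ := by linarith
      calc (2*Q+1) * (‖x‖ - B) ≤ (2*Q+1) * (n * δ) := by nlinarith
        _ = c * δ := by rw [hc]; ring
    rw [hKval]
    nlinarith [habs2.1, habs2.2]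
  -- minimizer
  obtain ⟨A, hA⟩ := hcoer
  have hmin : ∃ x : ({i : V // i ∉ T} → ℝ), ∀ y, Kv (ext x) ≤ Kv (ext y) := by
    apply (hKvcont.comp hextcont).exists_forall_le
    rw [← Metric.cobounded_eq_cocompact]
    apply Filter.tendsto_atTop_mono hA
    exact Filter.tendsto_atTop_add_const_right _ (-A) tendsto_norm_cobounded_atTop
  obtain ⟨x, hx⟩ := hmin
  set π₀ : V → ℝ := ext x with hπ₀
  refine ⟨π₀, fun t h => by simp [hπ₀, hext, h], ?_⟩
  intro i0 hi0
  have hupd : ∀ t : ℝ, Function.update π₀ i0 t = ext (Function.update x ⟨i0, hi0⟩ t) := by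
    intro t
    funext v
    by_cases h : v ∈ T
    · have hvne : v ≠ i0 := fun he => hi0 (he ▸ h)
      rw [Function.update_of_ne hvne]
      simp [hπ₀, hext, h]
    · by_cases hv : v = i0
      · subst hv
        simp [hext, h, Function.update_self]
      · have : (⟨v, h⟩ : {i : V // i ∉ T}) ≠ ⟨i0, hi0⟩ := by
          simp [Subtype.ext_iff]; exact hv
        rw [Function.update_of_ne hv]
        simp [hπ₀, hext, h, Function.update_of_ne this]
  have hlocmin : IsLocalMin (fun t => Kv (Function.update π₀ i0 t)) (π₀ i0) := by
    apply Filter.Eventually.of_forall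
    intro t
    have h0 : Function.update π₀ i0 (π₀ i0) = π₀ := Function.update_eq_self _ _
    simp only [h0]
    rw [hupd t]
    exact hx _
  set a : V × V → ℝ := fun p =>
    (if p.1 = i0 then (1:ℝ) else 0) - (if p.2 = i0 then (1:ℝ) else 0) with ha
  have hderiv : HasDerivAt (fun t => Kv (Function.update π₀ i0 t))
      ((∑ p ∈ P, finv p.1 p.2 (π₀ p.1 - π₀ p.2) * a p) - 2 * q ⟨i0, hi0⟩) (π₀ i0) := by
    have hupdv : ∀ (t : ℝ) (v : V), Function.update π₀ i0 t v = if v = i0 then t else π₀ v :=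
      fun t v => Function.update_apply π₀ i0 t v
    have hfun : (fun t => Kv (Function.update π₀ i0 t)) = fun t =>
        (∑ p ∈ P, Φ p.1 p.2 ((if p.1 = i0 then t else π₀ p.1) - (if p.2 = i0 then t else π₀ p.2)))
        - 2 * ∑ s : {i : V // i ∉ T}, q s * (if ↑s = i0 then t else π₀ ↑s) := by
      funext t
      simp only [hKv, hupdv]
    rw [hfun]
    apply HasDerivAt.sub
    · apply HasDerivAt.fun_sum
      intro p hp
      have hE := (hPmem p).1 hp
      have h1 : HasDerivAt (fun t : ℝ => if p.1 = i0 then t else π₀ p.1)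
          (if p.1 = i0 then (1:ℝ) else 0) (π₀ i0) := by
        split_ifs with h
        exacts [hasDerivAt_id _, hasDerivAt_const _ _]
      have h2 : HasDerivAt (fun t : ℝ => if p.2 = i0 then t else π₀ p.2)
          (if p.2 = i0 then (1:ℝ) else 0) (π₀ i0) := by
        split_ifs with h
        exacts [hasDerivAt_id _, hasDerivAt_const _ _]
      have hinner := h1.sub h2
      have harg1 : (if p.1 = i0 then π₀ i0 else π₀ p.1) = π₀ p.1 := by
        split_ifs with h
        · rw [h]
        · rfl
      have harg2 : (if p.2 = i0 then π₀ i0 else π₀ p.2) = π₀ p.2 := by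
        split_ifs with h
        · rw [h]
        · rfl
      have houter : HasDerivAt (Φ p.1 p.2) (finv p.1 p.2 (π₀ p.1 - π₀ p.2))
          ((if p.1 = i0 then π₀ i0 else π₀ p.1) - (if p.2 = i0 then π₀ i0 else π₀ p.2)) := by
        rw [harg1, harg2]
        exact hasDerivAt_primitive (hgcont _ _ hE) _
      exact houter.comp (π₀ i0) hinner
    · have hsum1 : HasDerivAt
          (fun t => ∑ s : {i : V // i ∉ T}, q s * (if ↑s = i0 then t else π₀ ↑s))
          (∑ s : {i : V // i ∉ T}, q s * (if ↑s = i0 then (1:ℝ) else 0)) (π₀ i0) := by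
        apply HasDerivAt.fun_sum
        intro s _
        have : HasDerivAt (fun t : ℝ => if (↑s : V) = i0 then t else π₀ ↑s)
            (if (↑s : V) = i0 then (1:ℝ) else 0) (π₀ i0) := by
          split_ifs with h
          exacts [hasDerivAt_id _, hasDerivAt_const _ _]
        exact this.const_mul (q s)
      have hsval : (∑ s : {i : V // i ∉ T}, q s * (if ↑s = i0 then (1:ℝ) else 0)) = q ⟨i0, hi0⟩ := by
        rw [Finset.sum_eq_single (⟨i0, hi0⟩ : {i : V // i ∉ T})]
        · simp
        · intro s _ hs
          have : (↑s : V) ≠ i0 := fun he => hs (Subtype.ext he)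
          simp [this]
        · intro h
          exact absurd (Finset.mem_univ _) h
      rw [← hsval]
      exact hsum1.const_mul 2
  have hzero : (∑ p ∈ P, finv p.1 p.2 (π₀ p.1 - π₀ p.2) * a p) - 2 * q ⟨i0, hi0⟩ = 0 :=
    hlocmin.hasDerivAt_eq_zero hderiv
  have hident : (∑ p ∈ P, finv p.1 p.2 (π₀ p.1 - π₀ p.2) * a p)
      = -2 * ∑ j ∈ univ.filter (fun j => E j i0), finv j i0 (π₀ j - π₀ i0) := by
    have hsplit : ∀ p ∈ P, finv p.1 p.2 (π₀ p.1 - π₀ p.2) * a p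
        = (if p.1 = i0 then finv p.1 p.2 (π₀ p.1 - π₀ p.2) else 0)
          - (if p.2 = i0 then finv p.1 p.2 (π₀ p.1 - π₀ p.2) else 0) := by
      intro p _
      simp only [ha]
      split_ifs <;> ring
    rw [Finset.sum_congr rfl hsplit, Finset.sum_sub_distrib]
    have hS1 : (∑ p ∈ P, if p.1 = i0 then finv p.1 p.2 (π₀ p.1 - π₀ p.2) else 0)
        = ∑ k ∈ univ.filter (fun k => E i0 k), finv i0 k (π₀ i0 - π₀ k) := by
      rw [hP, Finset.sum_filter, Finset.sum_filter, Fintype.sum_prod_type]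
      rw [Finset.sum_eq_single i0]
      · simp
      · intro j _ hj
        apply Finset.sum_eq_zero
        intro k _
        simp [hj]
      · intro h; exact absurd (Finset.mem_univ _) h
    have hS2 : (∑ p ∈ P, if p.2 = i0 then finv p.1 p.2 (π₀ p.1 - π₀ p.2) else 0)
        = ∑ j ∈ univ.filter (fun j => E j i0), finv j i0 (π₀ j - π₀ i0) := by
      rw [hP, Finset.sum_filter, Finset.sum_filter, Fintype.sum_prod_type]
      apply Finset.sum_congr rfl
      intro j _
      rw [Finset.sum_eq_single i0]
      · simp
      · intro k _ hk
        simp [hk]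
      · intro h; exact absurd (Finset.mem_univ _) h
    have hS1odd : (∑ k ∈ univ.filter (fun k => E i0 k), finv i0 k (π₀ i0 - π₀ k))
        = - ∑ j ∈ univ.filter (fun j => E j i0), finv j i0 (π₀ j - π₀ i0) := by
      rw [Finset.sum_filter, Finset.sum_filter, ← Finset.sum_neg_distrib]
      apply Finset.sum_congr rfl
      intro k _
      by_cases h : E i0 k
      · have h' : E k i0 := hsymm _ _ h
        rw [if_pos h, if_pos h', hgodd i0 k h, neg_sub]
      · have h' : ¬ E k i0 := fun hc => h (hsymm _ _ hc)
        rw [if_neg h, if_neg h', neg_zero]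
    rw [hS1, hS2, hS1odd]
    ring
  rw [hident] at hzero
  linarith
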